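/- Let N be a normal subgroup of a finite group G and H a subgroup with G = HN and H ∩ H^x ≤ H ∩ N for all x ∈ G \ H. Then every element of G \ N is conjugate to an element of H \ N, and moreover G \ N equals the union over x ∈ G of (H \ (H ∩ N))^x. -/

import Mathlib

open Subgroup

/-- `C` is a Frobenius complement in the ambient group: `1 < C < G` and
`C ∩ C^x = 1` for all `x ∉ C`. -/
def IsFrobeniusComplementIn {X : Type*} [Group X] (C : Subgroup X) : Prop :=
  ⊥ < C ∧ C < ⊤ ∧ ∀ x : X, x ∉ C → C ⊓ C.map (MulAut.conj x).toMonoidHom = ⊥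

/-- `X` is a Frobenius group. -/
def IsFrobeniusGroup (X : Type*) [Group X] : Prop :=
  ∃ C : Subgroup X, IsFrobeniusComplementIn C

/-- `K` is the Frobenius kernel of the ambient group: `K` is a proper nontrivial
normal subgroup admitting a Frobenius complement `C` with `X = K ⋊ C`. -/
def IsFrobeniusKernelIn {X : Type*} [Group X] (K : Subgroup X) : Prop :=
  K.Normal ∧ ⊥ < K ∧ K < ⊤ ∧ ∃ C : Subgroup X,
    (∀ x : X, x ∉ C → C ⊓ C.map (MulAut.conj x).toMonoidHom = ⊥) ∧
    K ⊔ C = ⊤ ∧ K ⊓ C = ⊥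

/-- `(X, H, L)` is a Frobenius–Wielandt triple: `L ⊴ H`, `L < H < X`, and
`H ∩ H^g ≤ L` for all `g ∉ H`. -/
def IsFWTriple {X : Type*} [Group X] (H L : Subgroup X) : Prop :=
  L ≤ H ∧ (L.subgroupOf H).Normal ∧ L < H ∧ H < ⊤ ∧
    ∀ g : X, g ∉ H → H ⊓ H.map (MulAut.conj g).toMonoidHom ≤ L

/-- `X` is a 2-Frobenius group: there are normal subgroups `K < L < X` with
`X/K` a Frobenius group with kernel `L/K` and `L` a Frobenius group with kernel `K`. -/
def Is2FrobeniusGroup (X : Type*) [Group X] : Prop :=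
  ∃ (K L : Subgroup X) (hK : K.Normal), L.Normal ∧ ⊥ < K ∧ K < L ∧ L < ⊤ ∧
    (@IsFrobeniusKernelIn _ (@QuotientGroup.Quotient.group X _ K hK)
      (L.map (@QuotientGroup.mk' X _ K hK))) ∧
    IsFrobeniusKernelIn (K.subgroupOf L)
theorem stmt_3 {G : Type*} [Group G] [Fintype G] (N H : Subgroup G) [N.Normal]
    (hHN : H ⊔ N = ⊤)
    (hFW : ∀ x : G, x ∉ H → H ⊓ H.map (MulAut.conj x).toMonoidHom ≤ H ⊓ N) :
    (∀ g : G, g ∉ N → ∃ x : G, ∃ h ∈ H, h ∉ N ∧ x * h * x⁻¹ = g) ∧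
    {g : G | g ∉ N} =
      ⋃ x : G, (fun a => x * a * x⁻¹) '' ((H : Set G) \ ((H ⊓ N : Subgroup G) : Set G)) := by
  classical
  set D : Set G := (H : Set G) \ ((H ⊓ N : Subgroup G) : Set G) with hDdef
  set S : Set G := ⋃ x : G, (fun a => x * a * x⁻¹) '' D with hSdef
  have hmemD : ∀ a ∈ D, a ∈ H ∧ a ∉ N := by
    intro a ha
    exact ⟨ha.1, fun han => ha.2 (by exact ⟨ha.1, han⟩)⟩
  -- S ⊆ {g | g ∉ N}
  have hsub : S ⊆ {g : G | g ∉ N} := by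
    rintro s hs
    obtain ⟨x, ⟨a, haD, rfl⟩⟩ := Set.mem_iUnion.mp hs
    obtain ⟨haH, haN⟩ := hmemD a haD
    intro hsn
    have h2 := (inferInstance : N.Normal).conj_mem _ hsn x⁻¹
    have h3 : x⁻¹ * (x * a * x⁻¹) * x⁻¹⁻¹ = a := by group
    exact haN (h3 ▸ h2)
  -- the counting map
  set f : (G ⧸ H) × D → G := fun p => p.1.out * (p.2 : G) * p.1.out⁻¹ with hfdef
  have hf_mem : ∀ p, f p ∈ S := by
    intro p
    exact Set.mem_iUnion.mpr ⟨p.1.out, ⟨(p.2 : G), p.2.2, rfl⟩⟩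
  have hf_inj : Function.Injective f := by
    rintro ⟨q, a, haD⟩ ⟨q', b, hbD⟩ hfe
    simp only [hfdef] at hfe
    set x := q.out with hx
    set y := q'.out with hy
    have hz : (y⁻¹ * x) * a * (y⁻¹ * x)⁻¹ = b := by
      have h4 : y⁻¹ * (x * a * x⁻¹) * y = y⁻¹ * (y * b * y⁻¹) * y := by rw [hfe]
      have h5 : y⁻¹ * (y * b * y⁻¹) * y = b := by group
      rw [h5] at h4
      rw [← h4]; group
    have hzH : y⁻¹ * x ∈ H := by
      by_contra hzH
      have hb2 : b ∈ H ⊓ H.map (MulAut.conj (y⁻¹ * x)).toMonoidHom := by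
        refine ⟨(hmemD b hbD).1, ⟨a, (hmemD a haD).1, ?_⟩⟩
        simpa [mul_assoc] using hz
      exact hbD.2 (hFW _ hzH hb2)
    have hq : q = q' := by
      rw [← QuotientGroup.out_eq' q, ← QuotientGroup.out_eq' q']
      exact QuotientGroup.eq.mpr (by simpa using H.inv_mem hzH)
    subst hq
    have hab : a = b := by
      have hxy : x = y := rfl
      rw [hxy] at hfe
      exact mul_left_cancel (mul_right_cancel hfe)
    simp [hab]
  have hf_surj : ∀ s ∈ S, ∃ p, f p = s := by
    intro s hs
    obtain ⟨x, ⟨a, haD, rfl⟩⟩ := Set.mem_iUnion.mp hs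
    set q : G ⧸ H := (x : G ⧸ H) with hq
    have hk : q.out⁻¹ * x ∈ H := QuotientGroup.eq.mp (QuotientGroup.out_eq' q)
    set k := q.out⁻¹ * x with hkdef
    have hbD : k * a * k⁻¹ ∈ D := by
      constructor
      · exact mul_mem (mul_mem hk haD.1) (H.inv_mem hk)
      · intro hbK
        have hbN : k * a * k⁻¹ ∈ N := hbK.2
        have h2 := (inferInstance : N.Normal).conj_mem _ hbN k⁻¹
        have h3 : k⁻¹ * (k * a * k⁻¹) * k⁻¹⁻¹ = a := by group
        exact (hmemD a haD).2 (h3 ▸ h2)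
    refine ⟨⟨q, ⟨k * a * k⁻¹, hbD⟩⟩, ?_⟩
    simp only [hfdef]
    have : q.out * k = x := by rw [hkdef]; group
    calc q.out * (k * a * k⁻¹) * q.out⁻¹ = (q.out * k) * a * (q.out * k)⁻¹ := by group
    _ = x * a * x⁻¹ := by rw [this]
  -- cardinalities
  have hcardS : Nat.card S = Nat.card (G ⧸ H) * Nat.card D := by
    have e : ((G ⧸ H) × D) ≃ S := by
      refine Equiv.ofBijective (fun p => ⟨f p, hf_mem p⟩) ⟨?_, ?_⟩
      · intro p p' hpp'
        exact hf_inj (congrArg Subtype.val hpp')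
      · rintro ⟨s, hs⟩
        obtain ⟨p, hp⟩ := hf_surj s hs
        exact ⟨p, Subtype.ext hp⟩
    rw [← Nat.card_congr e, Nat.card_prod]
  have hKH : ((H ⊓ N : Subgroup G) : Set G) ⊆ (H : Set G) :=
    SetLike.coe_subset_coe.mpr inf_le_left
  have hcardD : Nat.card D = Nat.card H - Nat.card (H ⊓ N : Subgroup G) := by
    rw [Nat.card_coe_set_eq, hDdef, Set.ncard_diff hKH, ← Nat.card_coe_set_eq,
      ← Nat.card_coe_set_eq]
    rfl
  -- second isomorphism theorem count
  have hrel : N.relIndex H = N.index := by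
    have e2 := QuotientGroup.quotientInfEquivProdNormalQuotient H N
    have h1 : N.relIndex H = N.relIndex (H ⊔ N) := by
      rw [Subgroup.relIndex, Subgroup.relIndex, Subgroup.index_eq_card,
        Subgroup.index_eq_card, Nat.card_congr e2.toEquiv]
    rw [h1, hHN, Subgroup.relIndex_top_right]
  have hcardH : Nat.card H = Nat.card (H ⊓ N : Subgroup G) * N.index := by
    have h1 : Nat.card (N.subgroupOf H) * (N.subgroupOf H).index = Nat.card H :=
      Subgroup.card_mul_index _
    have h2 : Nat.card (N.subgroupOf H) = Nat.card (H ⊓ N : Subgroup G) := by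
      rw [← Subgroup.inf_subgroupOf_left]
      exact Nat.card_congr (Subgroup.subgroupOfEquivOfLe inf_le_left).toEquiv
    rw [← h1, h2, Subgroup.relIndex] at *
    rw [hrel]
  have hG1 : Nat.card H * H.index = Nat.card G := Subgroup.card_mul_index H
  have hG2 : Nat.card N * N.index = Nat.card G := Subgroup.card_mul_index N
  have hjpos : 0 < N.index := Nat.pos_of_ne_zero (Subgroup.index_ne_zero_of_finite)
  have hcardN : Nat.card N = Nat.card (H ⊓ N : Subgroup G) * H.index := by
    have : Nat.card N * N.index = (Nat.card (H ⊓ N : Subgroup G) * H.index) * N.index := by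
      rw [hG2, ← hG1, hcardH]; ring
    exact Nat.eq_of_mul_eq_mul_right hjpos this
  have hba : Nat.card (H ⊓ N : Subgroup G) ≤ Nat.card H :=
    Nat.le_of_mul_le_mul_right (by rw [hcardH]; exact Nat.le_mul_of_pos_right _ hjpos) hjpos
  have hSval : Nat.card S = Nat.card G - Nat.card N := by
    rw [hcardS, hcardD, ← Subgroup.index_eq_card, Nat.mul_sub, mul_comm H.index (Nat.card H),
      hG1, mul_comm H.index (Nat.card (H ⊓ N : Subgroup G)), ← hcardN]
  -- complement cardinality
  have hcompl : ({g : G | g ∉ N} : Set G).ncard = Nat.card G - Nat.card N := by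
    have : {g : G | g ∉ N} = ((N : Set G))ᶜ := rfl
    rw [this]
    have h := Set.ncard_add_ncard_compl (N : Set G)
    have hN : (N : Set G).ncard = Nat.card N := by
      rw [← Nat.card_coe_set_eq]; simp
    omega
  have hSeq : S = {g : G | g ∉ N} := by
    refine Set.eq_of_subset_of_ncard_le hsub ?_ (Set.toFinite _)
    rw [hcompl, ← Nat.card_coe_set_eq, hSval]
  constructor
  · intro g hg
    have : g ∈ S := hSeq ▸ hg
    obtain ⟨x, ⟨a, haD, hxa⟩⟩ := Set.mem_iUnion.mp this
    exact ⟨x, a, (hmemD a haD).1, (hmemD a haD).2, hxa⟩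
  · exact hSeq.symm
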